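/- Assume A is quadratik. Then Γ_g(Mₙ(A)) = Mₙ(A) for every g ∈ G; that is, Mₙ(A) is a G-invariant subalgebra of B under the action Γ. -/

import Mathlib

/-- An algebra `A` is *quadratik* if every element of `A` is a finite sum
`a₁b₁ + … + a_kb_k` of products of elements of `A`. -/
def IsQuadratik (A : Type*) [NonUnitalNonAssocSemiring A] : Prop :=
  ∀ x : A, ∃ l : List (A × A), x = (l.map fun p => p.1 * p.2).sum

/-- An algebra `A` is *faithful* if `a·b = 0` for all `b` implies `a = 0`. -/
def IsFaithful (A : Type*) [Mul A] [Zero A] : Prop :=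
  ∀ a : A, (∀ b : A, a * b = 0) → a = 0

/-- Left multiplication `L_a : A → A`, `L_a(x) = a·x`, as a `ℂ`-linear
endomorphism of `A` (an element of `𝓛_A(A)`). -/
def Lmul {A : Type*} [NonUnitalRing A] [Module ℂ A] [SMulCommClass ℂ A A]
    (a : A) : Module.End ℂ A where
  toFun x := a * x
  map_add' := mul_add a
  map_smul' c x := mul_smul_comm c a x

/-- Membership in `𝓛_A(A)`: a `ℂ`-linear endomorphism `T` of `A` belongs to
`𝓛_A(A)` iff it is right `A`-linear (`T(ab) = T(a)·b`) and adjointable (for all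
`a` there is `d` with `a·T(x) = d·x` for all `x`). -/
def MemLA {A : Type*} [NonUnitalRing A] [Module ℂ A]
    (T : Module.End ℂ A) : Prop :=
  (∀ a b : A, T (a * b) = T a * b) ∧ ∀ a : A, ∃ d : A, ∀ x : A, a * T x = d * x

/-- A matrix over `𝓛_A(A)` (i.e. over `Module.End ℂ A`) belongs to the copy of
`Mₙ(A)` iff all its entries are left multiplications `L_a` with `a ∈ A`. -/
def InMnA {A : Type*} [NonUnitalRing A] [Module ℂ A] [SMulCommClass ℂ A A]
    {n : ℕ} (X : Matrix (Fin n) (Fin n) (Module.End ℂ A)) : Prop :=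
  ∀ i j, ∃ a : A, X i j = Lmul a

/-- The upper-left corner copy of `A` in `Mₙ(𝓛_A(A))`: `a ↦ L_a·E₁₁`. -/
def cornerA {A : Type*} [NonUnitalRing A] [Module ℂ A] [SMulCommClass ℂ A A]
    {n : ℕ} [NeZero n] (a : A) : Matrix (Fin n) (Fin n) (Module.End ℂ A) :=
  Matrix.of fun i j => if i = 0 ∧ j = 0 then Lmul a else 0

/-- Identification of `Aⁿ` with the first column of `Mₙ(A)`: the vector `ξ`
corresponds to the matrix whose first column has entries `L_{ξᵢ}` and whose
other entries vanish. -/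
def colMat {A : Type*} [NonUnitalRing A] [Module ℂ A] [SMulCommClass ℂ A A]
    {n : ℕ} [NeZero n] (ξ : Fin n → A) :
    Matrix (Fin n) (Fin n) (Module.End ℂ A) :=
  Matrix.of fun i j => if j = 0 then Lmul (ξ i) else 0

lemma Lmul_zero {A : Type*} [NonUnitalRing A] [Module ℂ A]
    [SMulCommClass ℂ A A] : Lmul (0 : A) = 0 := by
  ext x
  exact zero_mul x

lemma cornerA_inMnA {A : Type*} [NonUnitalRing A] [Module ℂ A]
    [SMulCommClass ℂ A A] {n : ℕ} [NeZero n] (a : A) :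
    InMnA (cornerA (n := n) a) := by
  intro i j
  by_cases h : i = 0 ∧ j = 0
  · exact ⟨a, by simp [cornerA, h]⟩
  · exact ⟨0, by simp [cornerA, h, Lmul_zero]⟩

lemma colMat_inMnA {A : Type*} [NonUnitalRing A] [Module ℂ A]
    [SMulCommClass ℂ A A] {n : ℕ} [NeZero n] (ξ : Fin n → A) :
    InMnA (colMat ξ) := by
  intro i j
  by_cases h : j = 0
  · exact ⟨ξ i, by simp [colMat, h]⟩
  · exact ⟨0, by simp [colMat, h, Lmul_zero]⟩


section Aux
variable {A : Type*} [NonUnitalRing A] [Module ℂ A] [SMulCommClass ℂ A A]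

lemma Lmul_add' (a b : A) : Lmul (a + b) = Lmul a + Lmul b := by
  ext x; exact add_mul a b x

lemma Lmul_mul' (a b : A) : Lmul (a * b) = Lmul a * Lmul b := by
  ext x; exact mul_assoc a b x

lemma cornerA_eq_std {n : ℕ} [NeZero n] (a : A) :
    cornerA (n := n) a = Matrix.single 0 0 (Lmul a) := by
  ext i j
  simp [cornerA, Matrix.single, eq_comm]

lemma std_inMnA {n : ℕ} [NeZero n] (i j : Fin n) (a : A) :
    InMnA (Matrix.single i j (Lmul a)) := by
  intro i' j'
  by_cases h : i = i' ∧ j = j'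
  · exact ⟨a, by simp [Matrix.single, h]⟩
  · exact ⟨0, by simp [Matrix.single, h, Lmul_zero]⟩

lemma InMnA_zero {n : ℕ} :
    InMnA (0 : Matrix (Fin n) (Fin n) (Module.End ℂ A)) :=
  fun _ _ => ⟨0, by simp [Lmul_zero]⟩

lemma InMnA_add {n : ℕ} {X Y : Matrix (Fin n) (Fin n) (Module.End ℂ A)}
    (hX : InMnA X) (hY : InMnA Y) : InMnA (X + Y) := by
  intro i j
  obtain ⟨a, ha⟩ := hX i j
  obtain ⟨b, hb⟩ := hY i j
  exact ⟨a + b, by simp [ha, hb, Lmul_add']⟩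

end Aux

/-- If `A` is quadratik, then `Γ_g(Mₙ(A)) = Mₙ(A)` for every `g ∈ G`; that is,
`Mₙ(A)` is a `G`-invariant subalgebra of `B` under the action `Γ`. -/
theorem stmt10 (A : Type*) [NonUnitalRing A] [Module ℂ A]
    [SMulCommClass ℂ A A] [IsScalarTower ℂ A A]
    (hquad : IsQuadratik A)
    (n : ℕ) [NeZero n]
    (G : Type*) [Group G]
    (B : NonUnitalSubalgebra ℂ (Matrix (Fin n) (Fin n) (Module.End ℂ A)))
    (hB : ∀ x : B, ∀ i j,
      MemLA ((x : Matrix (Fin n) (Fin n) (Module.End ℂ A)) i j))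
    (hMnA : ∀ X : Matrix (Fin n) (Fin n) (Module.End ℂ A), InMnA X → X ∈ B)
    (Γ : G →* RingAut B)
    (hΓlin : ∀ (g : G) (c : ℂ) (x : B), Γ g (c • x) = c • Γ g x)
    (α : G →* RingAut A)
    (hαlin : ∀ (g : G) (c : ℂ) (a : A), α g (c • a) = c • α g a)
    (hequiv : ∀ (g : G) (a : A),
      ((Γ g ⟨cornerA a, hMnA _ (cornerA_inMnA a)⟩ : B) :
          Matrix (Fin n) (Fin n) (Module.End ℂ A)) = cornerA (α g a)) :
    ∀ g : G,
      (∀ (X : Matrix (Fin n) (Fin n) (Module.End ℂ A)) (hX : InMnA X),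
        InMnA ((Γ g ⟨X, hMnA X hX⟩ : B) :
            Matrix (Fin n) (Fin n) (Module.End ℂ A))) ∧
      (∀ (Y : Matrix (Fin n) (Fin n) (Module.End ℂ A)), InMnA Y →
        ∃ (X : Matrix (Fin n) (Fin n) (Module.End ℂ A)) (hX : InMnA X),
          ((Γ g ⟨X, hMnA X hX⟩ : B) :
              Matrix (Fin n) (Fin n) (Module.End ℂ A)) = Y) := by
  classical
  -- the sandwich lemma: for any x y ∈ B and d ∈ A, x * cornerA d * y ∈ Mₙ(A)
  have sandwich : ∀ (x y : B) (d : A),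
      InMnA ((x : Matrix (Fin n) (Fin n) (Module.End ℂ A)) * cornerA d *
        (y : Matrix (Fin n) (Fin n) (Module.End ℂ A))) := by
    intro x y d
    obtain ⟨xm, hxB⟩ := x
    obtain ⟨ym, hyB⟩ := y
    show InMnA (xm * cornerA d * ym)
    intro i j
    have hx := hB ⟨xm, hxB⟩ i 0
    have hy := hB ⟨ym, hyB⟩ 0 j
    have hentry : ((xm * cornerA d * ym :
        Matrix (Fin n) (Fin n) (Module.End ℂ A))) i j
        = (xm i 0 * Lmul d) * ym 0 j := by
      rw [Matrix.mul_apply]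
      rw [Finset.sum_eq_single (0 : Fin n)]
      · rw [cornerA_eq_std, Matrix.mul_single_apply_same]
      · intro l _ hl
        rw [cornerA_eq_std, Matrix.mul_single_apply_of_ne (hbj := hl)]
        exact zero_mul _
      · intro h; exact absurd (Finset.mem_univ _) h
    have hcomp : xm i 0 * Lmul d = Lmul (xm i 0 d) := by
      ext z
      exact hx.1 d z
    obtain ⟨e, he⟩ := hy.2 (xm i 0 d)
    refine ⟨e, ?_⟩
    rw [hentry, hcomp]
    ext z
    exact he z
  -- the forward direction for every g
  have key : ∀ (g : G) (X : Matrix (Fin n) (Fin n) (Module.End ℂ A))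
      (hX : InMnA X),
      InMnA ((Γ g ⟨X, hMnA X hX⟩ : B) : Matrix (Fin n) (Fin n) (Module.End ℂ A)) := by
    intro g X hX
    -- elementary sandwiches
    set S : Set (Matrix (Fin n) (Fin n) (Module.End ℂ A)) :=
      {Z | ∃ (i j : Fin n) (u v c : A),
        Z = Matrix.single i 0 (Lmul u) * cornerA v *
          Matrix.single 0 j (Lmul c)} with hS
    -- every element of Mₙ(A) lies in the additive closure of S
    have hmemT : X ∈ AddSubmonoid.closure S := by
      rw [Matrix.matrix_eq_sum_single X]
      refine sum_mem (fun i _ => sum_mem (fun j _ => ?_))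
      obtain ⟨a, ha⟩ := hX i j
      rw [ha]
      obtain ⟨l, hl⟩ := hquad a
      rw [hl]; clear hl ha
      induction l with
      | nil =>
          simp only [List.map_nil, List.sum_nil, Lmul_zero,
            Matrix.single_zero]
          exact zero_mem _
      | cons p l ih =>
          simp only [List.map_cons, List.sum_cons, Lmul_add',
            Matrix.single_add]
          refine add_mem ?_ ih
          obtain ⟨l2, hl2⟩ := hquad p.1
          rw [hl2]; clear hl2
          induction l2 with
          | nil =>
              simp only [List.map_nil, List.sum_nil, zero_mul, Lmul_zero,
                Matrix.single_zero]
              exact zero_mem _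
          | cons q l2 ih2 =>
              simp only [List.map_cons, List.sum_cons, add_mul, Lmul_add',
                Matrix.single_add]
              refine add_mem ?_ ih2
              apply AddSubmonoid.subset_closure
              refine ⟨i, j, q.1, q.2, p.2, ?_⟩
              rw [cornerA_eq_std, Matrix.single_mul_single_same,
                Matrix.single_mul_single_same, ← Lmul_mul', ← Lmul_mul']
    -- closure induction
    have main : ∀ (Z : Matrix (Fin n) (Fin n) (Module.End ℂ A)),
        Z ∈ AddSubmonoid.closure S →
        ∃ h : Z ∈ B,
          InMnA ((Γ g ⟨Z, h⟩ : B) : Matrix (Fin n) (Fin n) (Module.End ℂ A)) := by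
      intro Z hZ
      induction hZ using AddSubmonoid.closure_induction with
      | mem Z hZ =>
          obtain ⟨i, j, u, v, c, rfl⟩ := hZ
          have hP := std_inMnA (n := n) i 0 u
          have hQ := std_inMnA (n := n) 0 j c
          have hmem : Matrix.single i 0 (Lmul u) * cornerA v *
              Matrix.single 0 j (Lmul c) ∈ B :=
            mul_mem (mul_mem (hMnA _ hP) (hMnA _ (cornerA_inMnA v))) (hMnA _ hQ)
          refine ⟨hmem, ?_⟩
          have hprod : (⟨_, hmem⟩ : B) =
              (⟨_, hMnA _ hP⟩ : B) * ⟨cornerA v, hMnA _ (cornerA_inMnA v)⟩ *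
                ⟨_, hMnA _ hQ⟩ := rfl
          rw [hprod, (Γ g).map_mul, (Γ g).map_mul]
          have hco : ((Γ g ⟨_, hMnA _ hP⟩ *
              Γ g ⟨cornerA v, hMnA _ (cornerA_inMnA v)⟩ *
              Γ g ⟨_, hMnA _ hQ⟩ : B) :
                Matrix (Fin n) (Fin n) (Module.End ℂ A))
              = ((Γ g ⟨_, hMnA _ hP⟩ : B) :
                  Matrix (Fin n) (Fin n) (Module.End ℂ A)) * cornerA (α g v) *
                ((Γ g ⟨_, hMnA _ hQ⟩ : B) :
                  Matrix (Fin n) (Fin n) (Module.End ℂ A)) := by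
            rw [← hequiv g v]
            rfl
          rw [hco]
          exact sandwich _ _ _
      | zero =>
          have h0 : ((0 : Matrix (Fin n) (Fin n) (Module.End ℂ A)) ∈ B) :=
            zero_mem _
          refine ⟨h0, ?_⟩
          have h1 : (⟨(0 : Matrix (Fin n) (Fin n) (Module.End ℂ A)), h0⟩ : B)
              = 0 := rfl
          rw [h1, (Γ g).map_zero]
          exact InMnA_zero
      | add Z W hZ hW ihZ ihW =>
          obtain ⟨hZB, hZI⟩ := ihZ
          obtain ⟨hWB, hWI⟩ := ihW
          refine ⟨add_mem hZB hWB, ?_⟩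
          have hadd : (⟨Z + W, add_mem hZB hWB⟩ : B) =
              ⟨Z, hZB⟩ + ⟨W, hWB⟩ := rfl
          rw [hadd, (Γ g).map_add]
          exact InMnA_add hZI hWI
    obtain ⟨h, hI⟩ := main X hmemT
    exact hI
  intro g
  refine ⟨key g, ?_⟩
  intro Y hY
  refine ⟨((Γ g⁻¹ ⟨Y, hMnA Y hY⟩ : B) :
    Matrix (Fin n) (Fin n) (Module.End ℂ A)), key g⁻¹ Y hY, ?_⟩
  have hsub : (⟨((Γ g⁻¹ ⟨Y, hMnA Y hY⟩ : B) :
      Matrix (Fin n) (Fin n) (Module.End ℂ A)),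
      hMnA _ (key g⁻¹ Y hY)⟩ : B) = Γ g⁻¹ ⟨Y, hMnA Y hY⟩ := rfl
  rw [hsub]
  have hcomp2 : Γ g (Γ g⁻¹ (⟨Y, hMnA Y hY⟩ : B))
      = (Γ g * Γ g⁻¹) (⟨Y, hMnA Y hY⟩ : B) := rfl
  rw [hcomp2, ← map_mul, mul_inv_cancel, map_one]
  rfl
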